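/- Let X be an invertible Hermitian d×d complex matrix. Then the trace norm t(Y) := ‖Y‖₁, as a function on the real vector space of Hermitian d×d complex matrices, is Fréchet differentiable at X with derivative H ↦ Tr[sign(X) · H]. -/

import Mathlib

open Matrix BigOperators
open scoped ComplexOrder Classical

attribute [local instance] Matrix.frobeniusNormedAddCommGroup Matrix.frobeniusNormedSpace
attribute [local instance] Matrix.frobeniusNormedRing Matrix.frobeniusNormedAlgebra

/-- Junk-valued positive semidefinite square root: for a positive semidefinite matrix it is
the PSD square root, otherwise it is `0`. -/
noncomputable def msqrt {n : Type*} [Fintype n] [DecidableEq n]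
    (M : Matrix n n ℂ) : Matrix n n ℂ :=
  if h : M.PosSemidef then
    (h.1.eigenvectorUnitary : Matrix n n ℂ) *
      Matrix.diagonal ((↑) ∘ (fun x : ℝ => Real.sqrt x) ∘ h.1.eigenvalues) *
      (star h.1.eigenvectorUnitary : Matrix n n ℂ)
  else 0

/-- The trace norm `‖M‖₁ = Tr √(Mᴴ M)` of a square complex matrix. -/
noncomputable def traceNorm {n : Type*} [Fintype n] [DecidableEq n]
    (M : Matrix n n ℂ) : ℝ :=
  (msqrt (Mᴴ * M)).trace.re

/-- Junk-valued matrix sign function: for a Hermitian matrix it applies `Real.sign`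
(with `sign 0 = 0`) to the eigenvalues through the spectral decomposition, otherwise `0`. -/
noncomputable def msign {n : Type*} [Fintype n] [DecidableEq n]
    (M : Matrix n n ℂ) : Matrix n n ℂ :=
  if h : M.IsHermitian then
    (h.eigenvectorUnitary : Matrix n n ℂ) *
      Matrix.diagonal (fun i => (Real.sign (h.eigenvalues i) : ℂ)) *
      (h.eigenvectorUnitary : Matrix n n ℂ)ᴴ
  else 0

/-- The continuous ℝ-linear functional `H ↦ Re Tr[B · H]` on complex matrices. -/
noncomputable def traceMulCLM {n : Type*} [Fintype n] [DecidableEq n]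
    (B : Matrix n n ℂ) : Matrix n n ℂ →L[ℝ] ℝ :=
  LinearMap.toContinuousLinearMap
    (Complex.reLm.comp
      (((Matrix.traceLinearMap n ℂ ℂ).restrictScalars ℝ).comp
        ((LinearMap.mulLeft ℂ B).restrictScalars ℝ)))

namespace TNP

variable {d : ℕ}

lemma norm_sq_eq (A : Matrix (Fin d) (Fin d) ℂ) :
    ‖A‖ ^ 2 = ∑ i, ∑ j, ‖A i j‖ ^ 2 := by
  rw [Matrix.frobenius_norm_def]
  rw [← Real.rpow_natCast _ 2, ← Real.rpow_mul (by positivity)]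
  norm_num

lemma trace_conjTranspose_mul (A : Matrix (Fin d) (Fin d) ℂ) :
    (Aᴴ * A).trace = ((∑ i, ∑ j, ‖A i j‖ ^ 2 : ℝ) : ℂ) := by
  simp only [Matrix.trace, Matrix.diag_apply, Matrix.mul_apply, Matrix.conjTranspose_apply]
  push_cast
  rw [Finset.sum_comm]
  congr 1; ext i; congr 1; ext j
  exact RCLike.conj_mul (A i j)

lemma norm_sq_eq_retrace (A : Matrix (Fin d) (Fin d) ℂ) :
    ‖A‖ ^ 2 = ((Aᴴ * A).trace).re := by
  rw [trace_conjTranspose_mul, Complex.ofReal_re, norm_sq_eq]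

lemma norm_unitary_conj (U : Matrix.unitaryGroup (Fin d) ℂ) (M : Matrix (Fin d) (Fin d) ℂ) :
    ‖(U : Matrix (Fin d) (Fin d) ℂ) * M * (U : Matrix (Fin d) (Fin d) ℂ)ᴴ‖ = ‖M‖ := by
  set V : Matrix (Fin d) (Fin d) ℂ := (U : Matrix (Fin d) (Fin d) ℂ) with hV
  have hU : Vᴴ * V = 1 := by
    simpa [Matrix.star_eq_conjTranspose] using Matrix.mem_unitaryGroup_iff'.mp U.2
  have hU' : ∀ Z : Matrix (Fin d) (Fin d) ℂ, Vᴴ * (V * Z) = Z := fun Z => by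
    rw [← mul_assoc, hU, one_mul]
  have h2 : ‖V * M * Vᴴ‖ ^ 2 = ‖M‖ ^ 2 := by
    rw [norm_sq_eq_retrace, norm_sq_eq_retrace]
    have key : (V * M * Vᴴ)ᴴ * (V * M * Vᴴ) = V * (Mᴴ * M) * Vᴴ := by
      simp only [Matrix.conjTranspose_mul, Matrix.conjTranspose_conjTranspose, mul_assoc, hU']
    rw [key, Matrix.trace_mul_cycle, ← mul_assoc, hU, one_mul]
  have := congrArg Real.sqrt h2
  rwa [Real.sqrt_sq (norm_nonneg _), Real.sqrt_sq (norm_nonneg _)] at this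

section hap

variable {Y : Matrix (Fin d) (Fin d) ℂ} (hY : Y.IsHermitian)

noncomputable def hap (f : ℝ → ℝ) : Matrix (Fin d) (Fin d) ℂ :=
  (hY.eigenvectorUnitary : Matrix (Fin d) (Fin d) ℂ) *
    Matrix.diagonal (fun i => (f (hY.eigenvalues i) : ℂ)) *
    (hY.eigenvectorUnitary : Matrix (Fin d) (Fin d) ℂ)ᴴ

lemma star_coe_unitary : ((hY.eigenvectorUnitary : Matrix (Fin d) (Fin d) ℂ))ᴴ *
    (hY.eigenvectorUnitary : Matrix (Fin d) (Fin d) ℂ) = 1 := by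
  simpa [Matrix.star_eq_conjTranspose] using
    Matrix.mem_unitaryGroup_iff'.mp hY.eigenvectorUnitary.2

lemma coe_unitary_star : (hY.eigenvectorUnitary : Matrix (Fin d) (Fin d) ℂ) *
    ((hY.eigenvectorUnitary : Matrix (Fin d) (Fin d) ℂ))ᴴ = 1 := by
  simpa [Matrix.star_eq_conjTranspose] using
    Matrix.mem_unitaryGroup_iff.mp hY.eigenvectorUnitary.2

lemma hap_mul_hap (f g : ℝ → ℝ) :
    hap hY f * hap hY g = hap hY (fun t => f t * g t) := by
  set V : Matrix (Fin d) (Fin d) ℂ := (hY.eigenvectorUnitary : Matrix (Fin d) (Fin d) ℂ)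
  have hU' : ∀ Z : Matrix (Fin d) (Fin d) ℂ, Vᴴ * (V * Z) = Z := fun Z => by
    rw [← mul_assoc, star_coe_unitary hY, one_mul]
  unfold hap
  show V * _ * Vᴴ * (V * _ * Vᴴ) = V * _ * Vᴴ
  simp only [mul_assoc, hU']
  congr 1
  rw [← mul_assoc, Matrix.diagonal_mul_diagonal]
  congr 1
  ext i
  push_cast
  ring

lemma trace_hap (f : ℝ → ℝ) :
    (hap hY f).trace = ((∑ i, f (hY.eigenvalues i) : ℝ) : ℂ) := by
  unfold hap
  rw [Matrix.trace_mul_cycle, star_coe_unitary hY, one_mul, Matrix.trace_diagonal]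
  push_cast
  rfl

lemma hap_posSemidef {f : ℝ → ℝ} (hf : ∀ t, 0 ≤ f t) : (hap hY f).PosSemidef := by
  unfold hap
  exact (Matrix.posSemidef_diagonal_iff.mpr fun i =>
    (by exact_mod_cast hf _ : (0:ℂ) ≤ (f (hY.eigenvalues i) : ℂ))).mul_mul_conjTranspose_same _

lemma self_eq_hap : Y = hap hY id := by
  unfold hap
  exact hY.spectral_theorem

lemma msign_eq_hap : msign Y = hap hY Real.sign := by
  simp only [msign, dif_pos hY]
  rfl

lemma msign_eq_hap' {g : ℝ → ℝ}
    (hg : ∀ i, g (hY.eigenvalues i) = Real.sign (hY.eigenvalues i)) :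
    msign Y = hap hY g := by
  have hfun : (fun i => ((Real.sign (hY.eigenvalues i) : ℝ) : ℂ)) =
      fun i => ((g (hY.eigenvalues i) : ℝ) : ℂ) := by
    funext i
    rw [hg i]
  rw [msign_eq_hap hY]
  unfold hap
  rw [hfun]

lemma hap_sub (f g : ℝ → ℝ) : hap hY f - hap hY g =
    (hY.eigenvectorUnitary : Matrix (Fin d) (Fin d) ℂ) *
    Matrix.diagonal (fun i => ((f (hY.eigenvalues i) - g (hY.eigenvalues i) : ℝ) : ℂ)) *
    (hY.eigenvectorUnitary : Matrix (Fin d) (Fin d) ℂ)ᴴ := by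
  unfold hap
  rw [← Matrix.sub_mul, ← Matrix.mul_sub]
  congr 2
  rw [Matrix.diagonal_sub]
  congr 1
  ext i
  push_cast
  ring

lemma norm_hap_sub (f g : ℝ → ℝ) :
    ‖hap hY f - hap hY g‖ =
      Real.sqrt (∑ i, (f (hY.eigenvalues i) - g (hY.eigenvalues i)) ^ 2) := by
  rw [hap_sub hY f g, norm_unitary_conj hY.eigenvectorUnitary, Matrix.frobenius_norm_diagonal]
  rw [EuclideanSpace.norm_eq]
  congr 1
  congr 1
  ext i
  rw [WithLp.ofLp_toLp]
  rw [Complex.norm_real]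
  exact sq_abs _

lemma traceNorm_hermitian : traceNorm Y = ∑ i, |hY.eigenvalues i| := by
  have h1 : Yᴴ * Y = hap hY (fun t => |t| * |t|) := by
    calc Yᴴ * Y = Y * Y := by rw [hY.eq]
      _ = hap hY (fun t => id t * id t) := by
          rw [← hap_mul_hap hY id id, ← self_eq_hap hY]
      _ = hap hY (fun t => |t| * |t|) := by
          congr 1
          funext t
          simp [abs_mul_abs_self]
  have hB : (hap hY (fun t => |t|)).PosSemidef := hap_posSemidef hY fun t => abs_nonneg t
  have hsq : (hap hY (fun t => |t|)) ^ 2 = Yᴴ * Y := by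
    rw [pow_two, hap_mul_hap hY, h1]
  have hP : (Yᴴ * Y).PosSemidef := Matrix.posSemidef_conjTranspose_mul_self Y
  have hcY : ∀ f : ℝ → ℝ, cfc f Y = hap hY f := fun f => by
    rw [hY.cfc_eq]
    rfl
  have hc1 : msqrt (Yᴴ * Y) = cfc Real.sqrt (Yᴴ * Y) := by
    rw [msqrt, dif_pos hP, hP.1.cfc_eq]
    rfl
  have hYY : Yᴴ * Y = cfc (fun t : ℝ => t * t) Y := by
    rw [hcY, h1]
    congr 1
    funext t
    exact abs_mul_abs_self t
  have hcomp : (Real.sqrt ∘ fun t : ℝ => t * t) = fun t => |t| :=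
    funext fun t => Real.sqrt_mul_self_eq_abs t
  rw [traceNorm, hc1, hYY, ← cfc_comp Real.sqrt (fun t : ℝ => t * t) Y (ha := hY.isSelfAdjoint),
    hcomp, hcY, trace_hap hY, Complex.ofReal_re]

end hap

lemma abs_sign_le_one (t : ℝ) : |Real.sign t| ≤ 1 := by
  rcases lt_trichotomy t 0 with h|h|h
  · rw [Real.sign_of_neg h]; norm_num
  · rw [h, Real.sign_zero]; norm_num
  · rw [Real.sign_of_pos h]; norm_num

lemma sign_mul_self (t : ℝ) : Real.sign t * t = |t| := by
  rcases lt_trichotomy t 0 with h|h|h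
  · rw [Real.sign_of_neg h, abs_of_neg h]; ring
  · rw [h, Real.sign_zero, abs_zero, mul_zero]
  · rw [Real.sign_of_pos h, abs_of_pos h, one_mul]

lemma conj_mul_re (w : ℂ) (t : ℝ) : ((starRingEnd ℂ) w * (t : ℂ) * w).re = t * ‖w‖ ^ 2 := by
  have h2 : (starRingEnd ℂ) w * w = ((‖w‖ ^ 2 : ℝ) : ℂ) := by
    rw [RCLike.conj_mul]; norm_cast
  have h : (starRingEnd ℂ) w * (t : ℂ) * w = (t : ℂ) * ((‖w‖ ^ 2 : ℝ) : ℂ) := by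
    rw [← h2]; ring
  rw [h, ← Complex.ofReal_mul, Complex.ofReal_re]

lemma diag_entry_bound {T : Matrix (Fin d) (Fin d) ℂ} (hT : Tᴴ * T = 1)
    {s : Fin d → ℝ} (hs : ∀ j, |s j| ≤ 1) (i : Fin d) :
    |((Tᴴ * Matrix.diagonal (fun j => ((s j : ℝ) : ℂ)) * T) i i).re| ≤ 1 := by
  have hcol : ∑ k, ‖T k i‖ ^ 2 = 1 := by
    have h1 := congrFun (congrFun hT i) i
    rw [Matrix.mul_apply] at h1
    have h2 := congrArg Complex.re h1
    rw [Complex.re_sum] at h2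
    simp only [Matrix.conjTranspose_apply, Matrix.one_apply_eq, Complex.one_re] at h2
    rw [← h2]
    congr 1
    funext k
    simpa using (conj_mul_re (T k i) 1).symm
  have hentry : ((Tᴴ * Matrix.diagonal (fun j => ((s j : ℝ) : ℂ)) * T) i i).re
      = ∑ k, s k * ‖T k i‖ ^ 2 := by
    rw [Matrix.mul_apply]
    simp only [Matrix.mul_diagonal, Matrix.conjTranspose_apply]
    rw [Complex.re_sum]
    congr 1
    funext k
    exact conj_mul_re (T k i) (s k)
  rw [hentry]
  calc |∑ k, s k * ‖T k i‖ ^ 2| ≤ ∑ k, |s k * ‖T k i‖ ^ 2| :=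
        Finset.abs_sum_le_sum_abs _ _
    _ = ∑ k, |s k| * ‖T k i‖ ^ 2 := by
        congr 1; funext k; rw [abs_mul, abs_of_nonneg (by positivity : (0:ℝ) ≤ ‖T k i‖ ^ 2)]
    _ ≤ ∑ k, 1 * ‖T k i‖ ^ 2 := by
        apply Finset.sum_le_sum
        intro k _
        apply mul_le_mul_of_nonneg_right (hs k) (by positivity)
    _ = 1 := by simp only [one_mul]; exact hcol

lemma re_trace_mul_hap {Y : Matrix (Fin d) (Fin d) ℂ} (hY : Y.IsHermitian)
    (S : Matrix (Fin d) (Fin d) ℂ) (f : ℝ → ℝ) :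
    ((S * hap hY f).trace).re = ∑ i, f (hY.eigenvalues i) *
      (((hY.eigenvectorUnitary : Matrix (Fin d) (Fin d) ℂ)ᴴ * S *
        (hY.eigenvectorUnitary : Matrix (Fin d) (Fin d) ℂ)) i i).re := by
  set V : Matrix (Fin d) (Fin d) ℂ := (hY.eigenvectorUnitary : Matrix (Fin d) (Fin d) ℂ)
  have h1 : S * hap hY f = (S * V) * Matrix.diagonal (fun i => ((f (hY.eigenvalues i) : ℝ) : ℂ)) * Vᴴ := by
    unfold hap
    simp only [mul_assoc]
    rfl
  rw [h1, Matrix.trace_mul_cycle]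
  have h2 : Vᴴ * (S * V) = Vᴴ * S * V := by rw [mul_assoc]
  rw [h2, Matrix.trace]
  rw [Complex.re_sum]
  congr 1
  funext i
  rw [Matrix.diag_apply, Matrix.mul_diagonal, mul_comm, Complex.re_ofReal_mul]

lemma re_trace_msign_mul_le {Y Z : Matrix (Fin d) (Fin d) ℂ} (hY : Y.IsHermitian)
    (hZ : Z.IsHermitian) : ((msign Z * Y).trace).re ≤ traceNorm Y := by
  set U : Matrix (Fin d) (Fin d) ℂ := (hY.eigenvectorUnitary : Matrix (Fin d) (Fin d) ℂ) with hUdef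
  set V : Matrix (Fin d) (Fin d) ℂ := (hZ.eigenvectorUnitary : Matrix (Fin d) (Fin d) ℂ) with hVdef
  have hYhap : ((msign Z * Y).trace).re = ((msign Z * hap hY id).trace).re := by
    rw [← self_eq_hap hY]
  rw [hYhap, re_trace_mul_hap hY (msign Z) id]
  set T : Matrix (Fin d) (Fin d) ℂ := Vᴴ * U with hTdef
  have hT : Tᴴ * T = 1 := by
    rw [hTdef, Matrix.conjTranspose_mul, Matrix.conjTranspose_conjTranspose]
    calc Uᴴ * V * (Vᴴ * U) = Uᴴ * (V * Vᴴ) * U := by simp only [mul_assoc]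
      _ = 1 := by rw [coe_unitary_star hZ, mul_one, star_coe_unitary hY]
  have hW : Uᴴ * msign Z * U =
      Tᴴ * Matrix.diagonal (fun j => ((Real.sign (hZ.eigenvalues j) : ℝ) : ℂ)) * T := by
    rw [msign_eq_hap hZ]
    unfold hap
    rw [hTdef, Matrix.conjTranspose_mul, Matrix.conjTranspose_conjTranspose]
    simp only [mul_assoc]
    rfl
  calc ∑ i, id (hY.eigenvalues i) * ((Uᴴ * msign Z * U) i i).re
      ≤ ∑ i, |hY.eigenvalues i| := by
        apply Finset.sum_le_sum
        intro i _
        have hb : |((Uᴴ * msign Z * U) i i).re| ≤ 1 := by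
          rw [hW]
          exact diag_entry_bound hT (fun j => abs_sign_le_one _) i
        calc id (hY.eigenvalues i) * ((Uᴴ * msign Z * U) i i).re
            ≤ |hY.eigenvalues i * ((Uᴴ * msign Z * U) i i).re| := le_abs_self _
          _ = |hY.eigenvalues i| * |((Uᴴ * msign Z * U) i i).re| := abs_mul _ _
          _ ≤ |hY.eigenvalues i| * 1 := by
              apply mul_le_mul_of_nonneg_left hb (abs_nonneg _)
          _ = |hY.eigenvalues i| := mul_one _
    _ = traceNorm Y := (traceNorm_hermitian hY).symm

lemma re_trace_msign_self {Y : Matrix (Fin d) (Fin d) ℂ} (hY : Y.IsHermitian) :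
    ((msign Y * Y).trace).re = traceNorm Y := by
  have h1 : msign Y * Y = hap hY (fun t => Real.sign t * id t) := by
    rw [← hap_mul_hap hY Real.sign id, ← self_eq_hap hY, msign_eq_hap hY]
  have hfg : (fun t => Real.sign t * id t) = fun t : ℝ => |t| := funext sign_mul_self
  rw [h1, hfg, trace_hap hY, Complex.ofReal_re, traceNorm_hermitian hY]

lemma re_trace_mul_le (A B : Matrix (Fin d) (Fin d) ℂ) :
    |((A * B).trace).re| ≤ ‖A‖ * ‖B‖ := by
  have h1 : |((A * B).trace).re| ≤ ∑ p : Fin d × Fin d, ‖A p.1 p.2‖ * ‖B p.2 p.1‖ := by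
    calc |((A * B).trace).re| ≤ ‖(A * B).trace‖ := Complex.abs_re_le_norm _
      _ = ‖∑ p : Fin d × Fin d, A p.1 p.2 * B p.2 p.1‖ := by
          congr 1
          rw [Matrix.trace, Fintype.sum_prod_type]
          apply Finset.sum_congr rfl
          intro i _
          rw [Matrix.diag_apply, Matrix.mul_apply]
      _ ≤ ∑ p : Fin d × Fin d, ‖A p.1 p.2 * B p.2 p.1‖ := norm_sum_le _ _
      _ = ∑ p : Fin d × Fin d, ‖A p.1 p.2‖ * ‖B p.2 p.1‖ := by
          congr 1; funext p; exact norm_mul _ _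
  have h2 : (∑ p : Fin d × Fin d, ‖A p.1 p.2‖ * ‖B p.2 p.1‖) ^ 2 ≤
      (∑ p : Fin d × Fin d, ‖A p.1 p.2‖ ^ 2) * (∑ p : Fin d × Fin d, ‖B p.2 p.1‖ ^ 2) :=
    Finset.sum_mul_sq_le_sq_mul_sq _ _ _
  have hA : ∑ p : Fin d × Fin d, ‖A p.1 p.2‖ ^ 2 = ‖A‖ ^ 2 := by
    rw [norm_sq_eq, Fintype.sum_prod_type]
  have hB : ∑ p : Fin d × Fin d, ‖B p.2 p.1‖ ^ 2 = ‖B‖ ^ 2 := by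
    rw [norm_sq_eq, Fintype.sum_prod_type, Finset.sum_comm]
  have h3 : (∑ p : Fin d × Fin d, ‖A p.1 p.2‖ * ‖B p.2 p.1‖) ≤ ‖A‖ * ‖B‖ := by
    have hnn : 0 ≤ ∑ p : Fin d × Fin d, ‖A p.1 p.2‖ * ‖B p.2 p.1‖ :=
      Finset.sum_nonneg fun p _ => mul_nonneg (norm_nonneg _) (norm_nonneg _)
    have h4 := Real.sqrt_le_sqrt h2
    rwa [Real.sqrt_sq hnn, hA, hB, Real.sqrt_mul (sq_nonneg _),
      Real.sqrt_sq (norm_nonneg _), Real.sqrt_sq (norm_nonneg _)] at h4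
  exact le_trans h1 h3


noncomputable def sumSq (v : Fin d → ℂ) : ℝ := ∑ i, ‖v i‖ ^ 2

lemma sumSq_nonneg (v : Fin d → ℂ) : 0 ≤ sumSq v :=
  Finset.sum_nonneg fun _ _ => sq_nonneg _

lemma sqrt_sumSq_eq (v : Fin d → ℂ) :
    Real.sqrt (sumSq v) = ‖(WithLp.equiv 2 (Fin d → ℂ)).symm v‖ := by
  rw [EuclideanSpace.norm_eq]
  congr 1

lemma sqrt_sumSq_add_le (a b : Fin d → ℂ) :
    Real.sqrt (sumSq (a + b)) ≤ Real.sqrt (sumSq a) + Real.sqrt (sumSq b) := by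
  rw [sqrt_sumSq_eq, sqrt_sumSq_eq, sqrt_sumSq_eq, WithLp.equiv_symm_apply, WithLp.toLp_add]
  exact norm_add_le _ _

lemma sumSq_smul (r : ℝ) (v : Fin d → ℂ) : sumSq (r • v) = r ^ 2 * sumSq v := by
  unfold sumSq
  rw [Finset.mul_sum]
  apply Finset.sum_congr rfl
  intro i _
  rw [Pi.smul_apply, norm_smul, mul_pow, Real.norm_eq_abs, sq_abs]

lemma sumSq_mulVec_le (M : Matrix (Fin d) (Fin d) ℂ) (v : Fin d → ℂ) :
    sumSq (M *ᵥ v) ≤ ‖M‖ ^ 2 * sumSq v := by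
  unfold sumSq
  rw [norm_sq_eq, Finset.sum_mul]
  apply Finset.sum_le_sum
  intro i _
  have h1 : ‖(M *ᵥ v) i‖ ≤ ∑ j, ‖M i j‖ * ‖v j‖ := by
    rw [Matrix.mulVec, dotProduct]
    calc ‖∑ j, M i j * v j‖ ≤ ∑ j, ‖M i j * v j‖ := norm_sum_le _ _
      _ = ∑ j, ‖M i j‖ * ‖v j‖ := by
          apply Finset.sum_congr rfl; intro j _; exact norm_mul _ _
  have h2 : (∑ j, ‖M i j‖ * ‖v j‖) ^ 2 ≤ (∑ j, ‖M i j‖ ^ 2) * ∑ j, ‖v j‖ ^ 2 :=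
    Finset.sum_mul_sq_le_sq_mul_sq _ _ _
  calc ‖(M *ᵥ v) i‖ ^ 2 ≤ (∑ j, ‖M i j‖ * ‖v j‖) ^ 2 :=
        pow_le_pow_left₀ (norm_nonneg _) h1 2
    _ ≤ _ := h2

lemma dot_star_self (v : Fin d → ℂ) : (dotProduct (star v) v).re = sumSq v := by
  rw [dotProduct, Complex.re_sum]
  apply Finset.sum_congr rfl
  intro i _
  simpa using conj_mul_re (v i) 1

lemma sumSq_unitary_mulVec {V : Matrix (Fin d) (Fin d) ℂ} (hV : Vᴴ * V = 1) (v : Fin d → ℂ) :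
    sumSq (V *ᵥ v) = sumSq v := by
  rw [← dot_star_self, ← dot_star_self]
  congr 1
  rw [Matrix.star_mulVec, Matrix.dotProduct_mulVec, Matrix.vecMul_vecMul, hV,
    Matrix.vecMul_one]

lemma eig_sumSq_one {Y : Matrix (Fin d) (Fin d) ℂ} (hY : Y.IsHermitian) (i : Fin d) :
    sumSq (⇑(hY.eigenvectorBasis i)) = 1 := by
  have h := hY.eigenvectorBasis.orthonormal.1 i
  rw [EuclideanSpace.norm_eq] at h
  rw [Real.sqrt_eq_one] at h
  exact h

lemma sumSq_mulVec_ge {X : Matrix (Fin d) (Fin d) ℂ} (hX : X.IsHermitian) {δ : ℝ}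
    (hδ0 : 0 ≤ δ) (hδ : ∀ j, δ ≤ |hX.eigenvalues j|) (w : Fin d → ℂ) :
    δ ^ 2 * sumSq w ≤ sumSq (X *ᵥ w) := by
  set U : Matrix (Fin d) (Fin d) ℂ := (hX.eigenvectorUnitary : Matrix (Fin d) (Fin d) ℂ)
  set D : Matrix (Fin d) (Fin d) ℂ :=
    Matrix.diagonal (fun i => ((hX.eigenvalues i : ℝ) : ℂ)) with hD
  have hXUDU : X = U * D * Uᴴ := self_eq_hap hX
  have hUU : Uᴴ * U = 1 := star_coe_unitary hX
  have hUU' : U * Uᴴ = 1 := coe_unitary_star hX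
  set z : Fin d → ℂ := Uᴴ *ᵥ w with hz
  have hXw : X *ᵥ w = U *ᵥ (D *ᵥ z) := by
    rw [hXUDU, hz, Matrix.mulVec_mulVec, Matrix.mulVec_mulVec]
  have hw : sumSq w = sumSq z := by
    have : U *ᵥ z = w := by
      rw [hz, Matrix.mulVec_mulVec, hUU', Matrix.one_mulVec]
    rw [← this, sumSq_unitary_mulVec hUU]
  rw [hXw, sumSq_unitary_mulVec hUU, hw]
  unfold sumSq
  rw [Finset.mul_sum]
  apply Finset.sum_le_sum
  intro i _
  rw [Matrix.mulVec_diagonal]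
  rw [norm_mul, Complex.norm_real, mul_pow, Real.norm_eq_abs, sq_abs]
  apply mul_le_mul_of_nonneg_right _ (sq_nonneg _)
  calc δ ^ 2 ≤ |hX.eigenvalues i| ^ 2 := pow_le_pow_left₀ hδ0 (hδ i) 2
    _ = hX.eigenvalues i ^ 2 := sq_abs _

lemma eig_abs_le_norm {Y : Matrix (Fin d) (Fin d) ℂ} (hY : Y.IsHermitian) (i : Fin d) :
    |hY.eigenvalues i| ≤ ‖Y‖ := by
  have heig := hY.mulVec_eigenvectorBasis i
  have h1 : sumSq (Y *ᵥ ⇑(hY.eigenvectorBasis i)) ≤ ‖Y‖ ^ 2 * sumSq ⇑(hY.eigenvectorBasis i) :=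
    sumSq_mulVec_le _ _
  rw [heig, sumSq_smul, eig_sumSq_one hY, mul_one, mul_one] at h1
  have := Real.sqrt_le_sqrt h1
  rwa [Real.sqrt_sq_eq_abs, Real.sqrt_sq (norm_nonneg _)] at this

lemma eig_lower {X Y : Matrix (Fin d) (Fin d) ℂ} (hX : X.IsHermitian) (hY : Y.IsHermitian)
    {δ : ℝ} (hδ0 : 0 ≤ δ) (hδ : ∀ j, δ ≤ |hX.eigenvalues j|) (i : Fin d) :
    δ ≤ |hY.eigenvalues i| + ‖Y - X‖ := by
  set u : Fin d → ℂ := ⇑(hY.eigenvectorBasis i) with hu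
  have hu1 : sumSq u = 1 := eig_sumSq_one hY i
  have hA : δ ≤ Real.sqrt (sumSq (X *ᵥ u)) := by
    have := sumSq_mulVec_ge hX hδ0 hδ u
    rw [hu1, mul_one] at this
    have h2 := Real.sqrt_le_sqrt this
    rwa [Real.sqrt_sq hδ0] at h2
  have hsplit : X *ᵥ u = Y *ᵥ u + (X - Y) *ᵥ u := by
    rw [← Matrix.add_mulVec, add_sub_cancel]
  have hYu : Real.sqrt (sumSq (Y *ᵥ u)) = |hY.eigenvalues i| := by
    rw [hY.mulVec_eigenvectorBasis i, sumSq_smul, hu1, mul_one, Real.sqrt_sq_eq_abs]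
  have hXYu : Real.sqrt (sumSq ((X - Y) *ᵥ u)) ≤ ‖Y - X‖ := by
    have := sumSq_mulVec_le (X - Y) u
    rw [hu1, mul_one] at this
    have h2 := Real.sqrt_le_sqrt this
    rwa [Real.sqrt_sq (norm_nonneg _), ← norm_sub_rev] at h2
  calc δ ≤ Real.sqrt (sumSq (X *ᵥ u)) := hA
    _ ≤ Real.sqrt (sumSq (Y *ᵥ u)) + Real.sqrt (sumSq ((X - Y) *ᵥ u)) := by
        rw [hsplit]; exact sqrt_sumSq_add_le _ _
    _ ≤ |hY.eigenvalues i| + ‖Y - X‖ := by rw [hYu]; exact add_le_add_right hXYu _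

lemma pow_unitary_conj {V M : Matrix (Fin d) (Fin d) ℂ} (h1 : Vᴴ * V = 1) (h2 : V * Vᴴ = 1)
    (n : ℕ) : (V * M * Vᴴ) ^ n = V * M ^ n * Vᴴ := by
  have hmid : ∀ Z : Matrix (Fin d) (Fin d) ℂ, Vᴴ * (V * Z) = Z := fun Z => by
    rw [← mul_assoc, h1, one_mul]
  induction n with
  | zero => rw [pow_zero, pow_zero, mul_one, h2]
  | succ n ih =>
      rw [pow_succ, pow_succ, ih]
      simp only [mul_assoc, hmid]

lemma aeval_unitary_conj {V M : Matrix (Fin d) (Fin d) ℂ} (h1 : Vᴴ * V = 1) (h2 : V * Vᴴ = 1)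
    (q : Polynomial ℂ) :
    Polynomial.aeval (V * M * Vᴴ) q = V * Polynomial.aeval M q * Vᴴ := by
  induction q using Polynomial.induction_on' with
  | add p q hp hq => rw [map_add, map_add, hp, hq, Matrix.mul_add, Matrix.add_mul]
  | monomial n a =>
      rw [Polynomial.aeval_monomial, Polynomial.aeval_monomial, pow_unitary_conj h1 h2,
        ← Algebra.smul_def, ← Algebra.smul_def, Matrix.mul_smul, Matrix.smul_mul]

lemma aeval_diagonal (v : Fin d → ℂ) (q : Polynomial ℂ) :
    Polynomial.aeval (Matrix.diagonal v) q =
      Matrix.diagonal (fun i => Polynomial.aeval (v i) q) := by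
  have h1 := Polynomial.aeval_algHom_apply (Matrix.diagonalAlgHom (n := Fin d) ℂ) v q
  have h2 : ∀ i, Polynomial.aeval (v i) q = (Polynomial.aeval v q : Fin d → ℂ) i := fun i =>
    Polynomial.aeval_algHom_apply (Pi.evalAlgHom ℂ (fun _ => ℂ) i) v q
  calc Polynomial.aeval (Matrix.diagonal v) q
      = Matrix.diagonal (Polynomial.aeval v q : Fin d → ℂ) := h1
    _ = Matrix.diagonal (fun i => Polynomial.aeval (v i) q) := by
        rw [show (Polynomial.aeval v q : Fin d → ℂ) = fun i => Polynomial.aeval (v i) q from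
          funext fun i => (h2 i).symm]

lemma aeval_hermitian {Y : Matrix (Fin d) (Fin d) ℂ} (hY : Y.IsHermitian) (p : Polynomial ℝ) :
    Polynomial.aeval Y (p.map (algebraMap ℝ ℂ)) = hap hY (fun t => p.eval t) := by
  set q : Polynomial ℂ := p.map (algebraMap ℝ ℂ) with hq
  set U : Matrix (Fin d) (Fin d) ℂ := (hY.eigenvectorUnitary : Matrix (Fin d) (Fin d) ℂ)
  set D : Matrix (Fin d) (Fin d) ℂ :=
    Matrix.diagonal (fun i => ((hY.eigenvalues i : ℝ) : ℂ)) with hD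
  have hYform : Y = U * D * Uᴴ := self_eq_hap hY
  have hform : Polynomial.aeval Y q = Polynomial.aeval (U * D * Uᴴ) q := by
    rw [← hYform]
  rw [hform, aeval_unitary_conj (star_coe_unitary hY) (coe_unitary_star hY), hD, aeval_diagonal]
  have hfun : (fun i => Polynomial.aeval ((hY.eigenvalues i : ℝ) : ℂ) q) =
      fun i => ((p.eval (hY.eigenvalues i) : ℝ) : ℂ) := by
    funext i
    rw [hq, Polynomial.aeval_map_algebraMap]
    exact Polynomial.aeval_algebraMap_apply_eq_algebraMap_eval _ p
  rw [hfun]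
  rfl

lemma msign_cont {X : Matrix (Fin d) (Fin d) ℂ} (hX : X.IsHermitian) (hinv : IsUnit X.det) :
    ∀ ε > 0, ∃ η > 0, ∀ Y : Matrix (Fin d) (Fin d) ℂ, Y.IsHermitian →
      ‖Y - X‖ < η → ‖msign Y - msign X‖ ≤ ε := by
  intro ε hε
  rcases Nat.eq_zero_or_pos d with hd | hd
  · refine ⟨1, one_pos, fun Y hY _ => ?_⟩
    have hzero : msign Y - msign X = 0 := by
      apply Matrix.ext
      intro i j
      exact absurd i.isLt (by omega)
    rw [hzero, norm_zero]
    exact le_of_lt hε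
  have hne : Nonempty (Fin d) := ⟨⟨0, hd⟩⟩
  set δ : ℝ := Finset.univ.inf' Finset.univ_nonempty (fun i => |hX.eigenvalues i|) with hδdef
  have hδle : ∀ i, δ ≤ |hX.eigenvalues i| := fun i => Finset.inf'_le _ (Finset.mem_univ i)
  have hδpos : 0 < δ := by
    rw [hδdef, Finset.lt_inf'_iff]
    intro i _
    have hni : hX.eigenvalues i ≠ 0 := by
      intro h0
      have hdet : X.det = ∏ j, (hX.eigenvalues j : ℂ) := hX.det_eq_prod_eigenvalues
      have hzero : X.det = 0 := by
        rw [hdet]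
        apply Finset.prod_eq_zero (Finset.mem_univ i)
        rw [h0]
        norm_num
      exact (hinv.ne_zero) hzero
    exact abs_pos.mpr hni
  set R : ℝ := ‖X‖ + δ with hR
  set g : ℝ → ℝ := fun t => max (-1) (min 1 (2 / δ * t)) with hg
  have hgcont : ContinuousOn g (Set.Icc (-R) R) := by
    apply Continuous.continuousOn
    exact continuous_const.max (continuous_const.min (continuous_const.mul continuous_id))
  have hgsign : ∀ t : ℝ, δ / 2 ≤ |t| → g t = Real.sign t := by
    intro t ht
    rcases le_or_gt (δ / 2) t with h | h
    · have h1 : (1 : ℝ) ≤ 2 / δ * t := by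
        rw [div_mul_eq_mul_div, le_div_iff₀ hδpos]
        linarith
      show max (-1) (min 1 (2 / δ * t)) = Real.sign t
      rw [min_eq_left h1, max_eq_right (by norm_num : (-1 : ℝ) ≤ 1),
        Real.sign_of_pos (by linarith)]
    · have h2 : t ≤ -(δ / 2) := by
        rcases abs_cases t with ⟨h3, _⟩ | ⟨h3, _⟩
        · linarith [ht.trans_eq h3]
        · rw [h3] at ht
          linarith
      have h1 : 2 / δ * t ≤ -1 := by
        rw [div_mul_eq_mul_div, div_le_iff₀ hδpos]
        linarith
      show max (-1) (min 1 (2 / δ * t)) = Real.sign t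
      rw [min_eq_right (by linarith : 2 / δ * t ≤ 1), max_eq_left h1,
        Real.sign_of_neg (by linarith)]
  set ε' : ℝ := ε / (3 * (Real.sqrt d + 1)) with hε'
  have hsd0 : (0:ℝ) ≤ Real.sqrt d := Real.sqrt_nonneg _
  have hε'pos : 0 < ε' := by
    rw [hε']
    positivity
  obtain ⟨p, hp⟩ := exists_polynomial_near_of_continuousOn (-R) R g hgcont ε' hε'pos
  set q : Polynomial ℂ := p.map (algebraMap ℝ ℂ) with hq
  have hcont : ContinuousAt (fun M : Matrix (Fin d) (Fin d) ℂ => Polynomial.aeval M q) X :=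
    (Polynomial.continuous_aeval (p := q)).continuousAt
  replace hcont := Metric.continuousAt_iff.mp hcont
  obtain ⟨η₁, hη₁pos, hη₁⟩ := hcont (ε / 3) (by positivity)
  refine ⟨min η₁ (δ / 2), lt_min hη₁pos (by positivity), fun Y hY hYX => ?_⟩
  have hXR : ‖X‖ ≤ R := by rw [hR]; linarith
  have hXwin : ∀ i, δ / 2 ≤ |hX.eigenvalues i| ∧ |hX.eigenvalues i| ≤ R := fun i =>
    ⟨le_trans (by linarith) (hδle i), le_trans (eig_abs_le_norm hX i) hXR⟩
  have hYX2 : ‖Y - X‖ ≤ δ / 2 := le_of_lt (lt_of_lt_of_le hYX (min_le_right _ _))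
  have hYwin : ∀ i, δ / 2 ≤ |hY.eigenvalues i| ∧ |hY.eigenvalues i| ≤ R := by
    intro i
    constructor
    · have := eig_lower hX hY (le_of_lt hδpos) hδle i
      linarith
    · have h1 := eig_abs_le_norm hY i
      have h2 : ‖Y‖ - ‖X‖ ≤ ‖Y - X‖ := norm_sub_norm_le Y X
      rw [hR]
      linarith
  have key : ∀ (Z : Matrix (Fin d) (Fin d) ℂ) (hZ : Z.IsHermitian),
      (∀ i, δ / 2 ≤ |hZ.eigenvalues i| ∧ |hZ.eigenvalues i| ≤ R) →
      ‖msign Z - Polynomial.aeval Z q‖ ≤ Real.sqrt d * ε' := by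
    intro Z hZ hwin
    rw [msign_eq_hap' hZ (fun i => hgsign _ (hwin i).1), hq, aeval_hermitian hZ p,
      norm_hap_sub]
    have hterm : ∀ i, (g (hZ.eigenvalues i) - p.eval (hZ.eigenvalues i)) ^ 2 ≤ ε' ^ 2 := by
      intro i
      have hmem : hZ.eigenvalues i ∈ Set.Icc (-R) R := by
        rcases abs_le.mp (hwin i).2 with ⟨hl, hr⟩
        exact ⟨hl, hr⟩
      have habs := hp _ hmem
      calc (g (hZ.eigenvalues i) - p.eval (hZ.eigenvalues i)) ^ 2
          = |p.eval (hZ.eigenvalues i) - g (hZ.eigenvalues i)| ^ 2 := by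
            rw [sq_abs]
            ring
        _ ≤ ε' ^ 2 := pow_le_pow_left₀ (abs_nonneg _) (le_of_lt habs) 2
    have hsum : (∑ i, (g (hZ.eigenvalues i) - p.eval (hZ.eigenvalues i)) ^ 2) ≤ d * ε' ^ 2 := by
      calc (∑ i, (g (hZ.eigenvalues i) - p.eval (hZ.eigenvalues i)) ^ 2)
          ≤ ∑ _i : Fin d, ε' ^ 2 := Finset.sum_le_sum fun i _ => hterm i
        _ = d * ε' ^ 2 := by
            rw [Finset.sum_const, Finset.card_univ, Fintype.card_fin, nsmul_eq_mul]
    calc Real.sqrt (∑ i, (g (hZ.eigenvalues i) - p.eval (hZ.eigenvalues i)) ^ 2)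
        ≤ Real.sqrt (d * ε' ^ 2) := Real.sqrt_le_sqrt hsum
      _ = Real.sqrt d * ε' := by
          rw [Real.sqrt_mul (Nat.cast_nonneg d), Real.sqrt_sq hε'pos.le]
  have hY3 := key Y hY hYwin
  have hX3 := key X hX hXwin
  have hmid : ‖Polynomial.aeval Y q - Polynomial.aeval X q‖ ≤ ε / 3 := by
    have hd1 : dist Y X < η₁ := by
      rw [dist_eq_norm]
      exact lt_of_lt_of_le hYX (min_le_left _ _)
    have := hη₁ hd1
    rw [dist_eq_norm] at this
    exact le_of_lt this
  have hsd : Real.sqrt d * ε' ≤ ε / 3 := by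
    have hpos1 : (0:ℝ) < Real.sqrt d + 1 := by linarith
    have h1 : Real.sqrt d * ε' ≤ (Real.sqrt d + 1) * ε' :=
      mul_le_mul_of_nonneg_right (by linarith) hε'pos.le
    have h2 : (Real.sqrt d + 1) * ε' = ε / 3 := by
      rw [hε']
      field_simp
    linarith
  calc ‖msign Y - msign X‖
      ≤ ‖msign Y - Polynomial.aeval Y q‖ + ‖Polynomial.aeval Y q - msign X‖ :=
        norm_sub_le_norm_sub_add_norm_sub _ _ _
    _ ≤ ‖msign Y - Polynomial.aeval Y q‖ +
        (‖Polynomial.aeval Y q - Polynomial.aeval X q‖ + ‖Polynomial.aeval X q - msign X‖) := by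
        have := norm_sub_le_norm_sub_add_norm_sub (Polynomial.aeval Y q) (Polynomial.aeval X q)
          (msign X)
        linarith
    _ ≤ Real.sqrt d * ε' + (ε / 3 + Real.sqrt d * ε') := by
        have hX3' : ‖Polynomial.aeval X q - msign X‖ ≤ Real.sqrt d * ε' := by
          rw [norm_sub_rev]
          exact hX3
        have h := add_le_add hmid hX3'
        have := add_le_add hY3 h
        linarith
    _ ≤ ε := by linarith

end TNP

theorem hasFDerivWithinAt_traceNorm_aux {d : ℕ}
    (X : Matrix (Fin d) (Fin d) ℂ) (hX : X.IsHermitian) (hinv : IsUnit X.det) :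
    HasFDerivWithinAt (fun Y : Matrix (Fin d) (Fin d) ℂ => traceNorm Y)
      (traceMulCLM (msign X))
      {Y : Matrix (Fin d) (Fin d) ℂ | Y.IsHermitian} X := by
  have hlo : (fun Y : Matrix (Fin d) (Fin d) ℂ =>
      traceNorm Y - traceNorm X - traceMulCLM (msign X) (Y - X))
      =o[nhdsWithin X {Y : Matrix (Fin d) (Fin d) ℂ | Y.IsHermitian}]
      fun Y => Y - X := by
    rw [Asymptotics.isLittleO_iff]
    intro c hc
    obtain ⟨η, hη, hbound⟩ := TNP.msign_cont hX hinv c hc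
    have hmem : ∀ᶠ Y in nhdsWithin X {Y : Matrix (Fin d) (Fin d) ℂ | Y.IsHermitian},
        Y ∈ {Y : Matrix (Fin d) (Fin d) ℂ | Y.IsHermitian} := eventually_mem_nhdsWithin
    have hball : ∀ᶠ Y in nhdsWithin X {Y : Matrix (Fin d) (Fin d) ℂ | Y.IsHermitian},
        ‖Y - X‖ < η := by
      apply Filter.Eventually.filter_mono nhdsWithin_le_nhds
      filter_upwards [Metric.ball_mem_nhds X hη] with Y hYb
      rw [Metric.mem_ball, dist_eq_norm] at hYb
      exact hYb
    filter_upwards [hmem, hball] with Y hYH hYd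
    have hY : Y.IsHermitian := hYH
    have hlin : traceMulCLM (msign X) (Y - X)
        = ((msign X * Y).trace).re - ((msign X * X).trace).re := by
      have h0 : traceMulCLM (msign X) (Y - X) = ((msign X * (Y - X)).trace).re := rfl
      rw [h0, Matrix.mul_sub, Matrix.trace_sub, Complex.sub_re]
    set e : ℝ := traceNorm Y - ((msign X * Y).trace).re with he
    have hXtr : ((msign X * X).trace).re = traceNorm X := TNP.re_trace_msign_self hX
    have hexpr : traceNorm Y - traceNorm X - traceMulCLM (msign X) (Y - X) = e := by
      rw [hlin, hXtr, he]
      ring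
    have he0 : 0 ≤ e := by
      rw [he]
      have := TNP.re_trace_msign_mul_le hY hX
      linarith
    have heB : e ≤ ‖msign Y - msign X‖ * ‖Y - X‖ := by
      have h1 : ((msign Y * X).trace).re ≤ traceNorm X := TNP.re_trace_msign_mul_le hX hY
      have h2 : (((msign Y - msign X) * (Y - X)).trace).re
          = ((msign Y * Y).trace).re - ((msign Y * X).trace).re
            - ((msign X * Y).trace).re + ((msign X * X).trace).re := by
        rw [Matrix.sub_mul, Matrix.mul_sub, Matrix.mul_sub, Matrix.trace_sub,
          Matrix.trace_sub, Matrix.trace_sub, Complex.sub_re, Complex.sub_re, Complex.sub_re]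
        ring
      have h3 := TNP.re_trace_mul_le (msign Y - msign X) (Y - X)
      have h4 : e ≤ (((msign Y - msign X) * (Y - X)).trace).re := by
        rw [h2, TNP.re_trace_msign_self hY, hXtr, he]
        linarith
      calc e ≤ (((msign Y - msign X) * (Y - X)).trace).re := h4
        _ ≤ |(((msign Y - msign X) * (Y - X)).trace).re| := le_abs_self _
        _ ≤ ‖msign Y - msign X‖ * ‖Y - X‖ := h3
    rw [hexpr, Real.norm_eq_abs, abs_of_nonneg he0]
    calc e ≤ ‖msign Y - msign X‖ * ‖Y - X‖ := heB
      _ ≤ c * ‖Y - X‖ :=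
        mul_le_mul_of_nonneg_right (hbound Y hYH hYd) (norm_nonneg _)
  exact HasFDerivWithinAt.of_isLittleO hlo



/-- The trace norm is Fréchet differentiable, within the real vector space of Hermitian
matrices, at any invertible Hermitian `X`, with derivative `H ↦ Tr[sign(X) · H]`. -/
theorem hasFDerivWithinAt_traceNorm {d : ℕ}
    (X : Matrix (Fin d) (Fin d) ℂ) (hX : X.IsHermitian) (hinv : IsUnit X.det) :
    HasFDerivWithinAt (fun Y : Matrix (Fin d) (Fin d) ℂ => traceNorm Y)
      (traceMulCLM (msign X))
      {Y : Matrix (Fin d) (Fin d) ℂ | Y.IsHermitian} X :=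
  hasFDerivWithinAt_traceNorm_aux X hX hinv
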